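/- Let h(z) = Σ_{k=0}^∞ a_k z^k be analytic on the unit disk 𝔻 with |h(z)| ≤ 1 for all z ∈ 𝔻. Then for every r with 0 < r ≤ 1/2, Σ_{k=1}^∞ |a_k|² r^k ≤ r(1 − |a_0|²)² / (1 − |a_0|² r). -/

import Mathlib

open Metric Complex

lemma normSq_mobius (u v : ℂ) :
    Complex.normSq (1 - (starRingEnd ℂ) v * u) - Complex.normSq (u - v)
      = (1 - Complex.normSq u) * (1 - Complex.normSq v) := by
  simp only [Complex.normSq_apply, Complex.sub_re, Complex.sub_im, Complex.mul_re, Complex.mul_im,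
    Complex.one_re, Complex.one_im, Complex.conj_re, Complex.conj_im]
  ring

lemma schwarz_pick {h : ℂ → ℂ}
    (hhd : DifferentiableOn ℂ h (ball (0:ℂ) 1))
    (hb : ∀ z ∈ ball (0:ℂ) 1, ‖h z‖ ≤ 1)
    {z : ℂ} (hz : z ∈ ball (0:ℂ) 1) :
    ‖h z - h 0‖ ≤ ‖z‖ * ‖1 - (starRingEnd ℂ) (h 0) * h z‖ := by
  have h0mem : (0:ℂ) ∈ ball (0:ℂ) 1 := by simp
  have key : ∀ t : ℝ, t ∈ Set.Ioo (0:ℝ) 1 →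
      t * ‖h z - h 0‖
        ≤ ‖z‖ * ‖1 - ((t:ℂ))^2 * ((starRingEnd ℂ) (h 0) * h z)‖ := by
    intro t ht
    set f : ℂ → ℂ := fun w => (t:ℂ) * h w with hf
    have hfb : ∀ w ∈ ball (0:ℂ) 1, ‖f w‖ ≤ t := by
      intro w hw
      calc ‖f w‖ = t * ‖h w‖ := by
            simp [hf, norm_mul, Complex.norm_real, Real.norm_eq_abs, _root_.abs_of_nonneg ht.1.le]
        _ ≤ t * 1 := by
            exact mul_le_mul_of_nonneg_left (hb w hw) ht.1.le
        _ = t := mul_one t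
    have hdenne : ∀ w ∈ ball (0:ℂ) 1, 1 - (starRingEnd ℂ) (f 0) * f w ≠ 0 := by
      intro w hw hcon
      have h1 : ‖(starRingEnd ℂ) (f 0) * f w‖ ≤ t * t := by
        rw [norm_mul, Complex.norm_conj]
        exact mul_le_mul (hfb 0 h0mem) (hfb w hw) (norm_nonneg _) ht.1.le
      have h2 : (1 : ℂ) = (starRingEnd ℂ) (f 0) * f w := by linear_combination hcon
      rw [← h2] at h1
      simp only [norm_one] at h1
      nlinarith [ht.1, ht.2]
    have hfd : DifferentiableOn ℂ f (ball (0:ℂ) 1) :=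
      (differentiableOn_const ((t:ℂ))).mul hhd
    set g : ℂ → ℂ := fun w => (f w - f 0) / (1 - (starRingEnd ℂ) (f 0) * f w) with hg
    have hgd : DifferentiableOn ℂ g (ball (0:ℂ) 1) := by
      apply DifferentiableOn.div
      · exact hfd.sub_const (f 0)
      · exact (differentiableOn_const 1).sub ((differentiableOn_const _).mul hfd)
      · exact hdenne
    have hgmaps : Set.MapsTo g (ball (0:ℂ) 1) (ball (0:ℂ) 1) := by
      intro w hw
      rw [mem_ball_zero_iff]
      have hid := normSq_mobius (f w) (f 0)
      have hu : Complex.normSq (f w) ≤ t^2 := by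
        rw [← Complex.sq_norm]; nlinarith [hfb w hw, norm_nonneg (f w)]
      have hv : Complex.normSq (f 0) ≤ t^2 := by
        rw [← Complex.sq_norm]; nlinarith [hfb 0 h0mem, norm_nonneg (f 0)]
      have h3 : (1 - Complex.normSq (f w)) * (1 - Complex.normSq (f 0)) > 0 :=
        mul_pos (by nlinarith [ht.1, ht.2]) (by nlinarith [ht.1, ht.2])
      have hnum : Complex.normSq (f w - f 0) < Complex.normSq (1 - (starRingEnd ℂ) (f 0) * f w) := by
        linarith
      have hden0 : ‖1 - (starRingEnd ℂ) (f 0) * f w‖ > 0 :=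
        (norm_pos_iff.mpr (hdenne w hw))
      rw [hg]
      simp only [norm_div]
      rw [div_lt_one hden0]
      rw [← Complex.sq_norm, ← Complex.sq_norm] at hnum
      nlinarith [norm_nonneg (f w - f 0)]
    have hg0 : g 0 = 0 := by simp [hg]
    have hmain := Complex.norm_le_norm_of_mapsTo_ball hgd (hgmaps.mono_right ball_subset_closedBall) hg0 (mem_ball_zero_iff.mp hz)
    have hden0 : ‖1 - (starRingEnd ℂ) (f 0) * f z‖ > 0 :=
      norm_pos_iff.mpr (hdenne z hz)
    rw [hg] at hmain
    simp only [norm_div] at hmain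
    rw [div_le_iff₀ hden0] at hmain
    have he1 : ‖f z - f 0‖ = t * ‖h z - h 0‖ := by
      rw [hf]
      rw [show (t:ℂ) * h z - (t:ℂ) * h 0 = (t:ℂ) * (h z - h 0) by ring, norm_mul,
        Complex.norm_real, Real.norm_eq_abs, _root_.abs_of_nonneg ht.1.le]
    have he2 : (starRingEnd ℂ) (f 0) * f z = ((t:ℂ))^2 * ((starRingEnd ℂ) (h 0) * h z) := by
      simp only [hf, map_mul, Complex.conj_ofReal]
      ring
    rw [he1, he2] at hmain
    exact hmain
  have hlhs : Filter.Tendsto (fun t : ℝ => t * ‖h z - h 0‖)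
      (nhdsWithin 1 (Set.Iio 1)) (nhds (‖h z - h 0‖)) := by
    have : Filter.Tendsto (fun t : ℝ => t * ‖h z - h 0‖) (nhds 1)
        (nhds (1 * ‖h z - h 0‖)) :=
      (continuous_id.mul continuous_const).tendsto 1
    rw [one_mul] at this
    exact this.mono_left nhdsWithin_le_nhds
  have hrhs : Filter.Tendsto
      (fun t : ℝ => ‖z‖ * ‖1 - ((t:ℂ))^2 * ((starRingEnd ℂ) (h 0) * h z)‖)
      (nhdsWithin 1 (Set.Iio 1))
      (nhds (‖z‖ * ‖1 - (starRingEnd ℂ) (h 0) * h z‖)) := by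
    have hc : Continuous (fun t : ℝ =>
        ‖z‖ * ‖1 - ((t:ℂ))^2 * ((starRingEnd ℂ) (h 0) * h z)‖) := by
      continuity
    have := hc.tendsto 1
    simp only [Complex.ofReal_one, one_pow, one_mul] at this
    exact this.mono_left nhdsWithin_le_nhds
  refine le_of_tendsto_of_tendsto hlhs hrhs ?_
  filter_upwards [Ioo_mem_nhdsLT_of_mem (Set.mem_Ioc.mpr ⟨zero_lt_one, le_refl 1⟩)] with t ht
  exact key t ht

lemma E_integral (n : ℤ) :
    (∫ θ in (0:ℝ)..(2*Real.pi), Complex.exp (n * θ * Complex.I))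
      = if n = 0 then (2*Real.pi : ℂ) else 0 := by
  split_ifs with hn
  · subst hn; simp [Complex.exp_zero]
  · have hc : (n : ℂ) * Complex.I ≠ 0 := by simp [Complex.ext_iff, hn]
    have hrw : ∀ θ : ℝ, (n : ℂ) * θ * Complex.I = ((n:ℂ) * Complex.I) * θ := by intro θ; ring
    simp only [hrw]
    rw [integral_exp_mul_complex hc]
    have h1 : Complex.exp ((n:ℂ) * Complex.I * (2*Real.pi)) = 1 := by
      have := Complex.exp_int_mul_two_pi_mul_I n
      rw [← this]; ring_nf
    simp [h1]

lemma SPexpand (s p : ℂ) :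
    Complex.normSq (s - p)
      = Complex.normSq s - 2*((s * (starRingEnd ℂ) p).re) + ((p * (starRingEnd ℂ) p).re) := by
  simp only [Complex.normSq_apply, Complex.mul_re, Complex.mul_im, Complex.sub_re, Complex.sub_im,
    Complex.conj_re, Complex.conj_im]
  ring

lemma Texpand (cc w : ℂ) :
    Complex.normSq (1 - (starRingEnd ℂ) cc * w)
      = (1 - Complex.normSq cc)^2 + Complex.normSq cc * Complex.normSq (w - cc)
        + 2 * ((((Complex.normSq cc : ℂ) - 1) * ((starRingEnd ℂ) cc * (w - cc))).re) := by
  simp only [Complex.normSq_apply, Complex.mul_re, Complex.mul_im, Complex.sub_re, Complex.sub_im,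
    Complex.one_re, Complex.one_im, Complex.conj_re, Complex.conj_im, Complex.ofReal_re,
    Complex.ofReal_im]
  ring

set_option maxHeartbeats 1000000 in
/-- If `h(z) = ∑ aₖ zᵏ` is analytic on the unit disk with `|h| ≤ 1`, then for `0 < r ≤ 1/2`,
`∑_{k≥1} |aₖ|² rᵏ ≤ r(1-|a₀|²)²/(1-|a₀|² r)`. -/
theorem stmt13 (h : ℂ → ℂ) (a : ℕ → ℂ)
    (hha : ∀ z ∈ ball (0:ℂ) 1, HasSum (fun k => a k * z ^ k) (h z))
    (hhd : DifferentiableOn ℂ h (ball (0:ℂ) 1))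
    (hb : ∀ z ∈ ball (0:ℂ) 1, ‖h z‖ ≤ 1)
    (r : ℝ) (hr0 : 0 < r) (hr : r ≤ 1/2) :
    (∑' k : ℕ, (‖a (k+1)‖)^2 * r ^ (k+1))
      ≤ r * (1 - (‖a 0‖)^2)^2 / (1 - (‖a 0‖)^2 * r) := by
  have hπ := Real.pi_pos
  have h0mem : (0:ℂ) ∈ ball (0:ℂ) 1 := by simp
  have hh0 : h 0 = a 0 := by
    have h1 := hha 0 h0mem
    have h2 : HasSum (fun k : ℕ => a k * 0 ^ k) (a 0) := by
      convert hasSum_ite_eq 0 (a 0) using 2 with k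
      by_cases hk : k = 0 <;> simp [hk]
    exact h1.unique h2
  set ρ := Real.sqrt r with hρdef
  have hρ0 : 0 < ρ := Real.sqrt_pos.mpr hr0
  have hρr : ρ^2 = r := Real.sq_sqrt hr0.le
  have hρ1 : ρ < 1 := by nlinarith
  set φ : ℝ → ℂ := fun θ => (ρ:ℂ) * Complex.exp (θ * Complex.I) with hφdef
  have hφmem : ∀ θ, φ θ ∈ ball (0:ℂ) 1 := by
    intro θ
    rw [mem_ball_zero_iff]
    simp only [hφdef, norm_mul, Complex.norm_real, Real.norm_eq_abs,
      Complex.norm_exp_ofReal_mul_I, mul_one]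
    rw [_root_.abs_of_pos hρ0]; exact hρ1
  have hφcont : Continuous φ := by
    apply continuous_const.mul
    exact Complex.continuous_exp.comp (by continuity)
  have hhcont : Continuous fun θ => h (φ θ) :=
    hhd.continuousOn.comp_continuous hφcont hφmem
  -- summability of |a k| ρ^k
  have hsummable : Summable (fun k : ℕ => ‖a k‖ * ρ^k) := by
    obtain ⟨ρ', hρρ', hρ'1⟩ := exists_between hρ1
    have hρ'0 : 0 < ρ' := hρ0.trans hρρ'
    have hmem : ((ρ':ℝ):ℂ) ∈ ball (0:ℂ) 1 := by
      rw [mem_ball_zero_iff]; simp [Complex.norm_real, Real.norm_eq_abs, _root_.abs_of_pos hρ'0, hρ'1]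
    have hs := (hha _ hmem).summable
    have ht0 : Filter.Tendsto (fun k : ℕ => ‖a k * ((ρ':ℝ):ℂ)^k‖) Filter.atTop (nhds 0) := by
      simpa using hs.tendsto_atTop_zero.norm
    obtain ⟨M, hM⟩ := ht0.bddAbove_range
    have hMb : ∀ k : ℕ, ‖a k‖ * ρ'^k ≤ M := by
      intro k
      have := hM (Set.mem_range_self k)
      simpa [Complex.norm_real, Real.norm_eq_abs, _root_.abs_of_pos hρ'0, mul_pow] using this
    have hq1 : ρ / ρ' < 1 := (div_lt_one hρ'0).mpr hρρ'
    have hq0 : 0 ≤ ρ / ρ' := div_nonneg hρ0.le hρ'0.le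
    apply Summable.of_nonneg_of_le
      (fun k => mul_nonneg (norm_nonneg _) (pow_nonneg hρ0.le _))
      (fun k => ?_) ((summable_geometric_of_lt_one hq0 hq1).mul_left M)
    have heq : ‖a k‖ * ρ^k = (‖a k‖ * ρ'^k) * (ρ/ρ')^k := by
      have h2 : ρ'^k * (ρ/ρ')^k = ρ^k := by
        rw [div_pow]
        field_simp
      rw [mul_assoc, h2]
    rw [heq]
    exact mul_le_mul_of_nonneg_right (hMb k) (pow_nonneg hq0 _)
  -- coefficient integrals
  have hcoef : ∀ m : ℕ, (∫ θ in (0:ℝ)..(2*Real.pi),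
      h (φ θ) * Complex.exp ((-(m:ℤ)) * θ * Complex.I))
      = 2*Real.pi * (a m * (ρ:ℂ)^m) := by
    intro m
    have hHS : HasSum (fun k : ℕ => ∫ θ in (0:ℝ)..(2*Real.pi),
        (a k * φ θ ^ k) * Complex.exp ((-(m:ℤ)) * θ * Complex.I))
        (∫ θ in (0:ℝ)..(2*Real.pi), h (φ θ) * Complex.exp ((-(m:ℤ)) * θ * Complex.I)) := by
      apply intervalIntegral.hasSum_integral_of_dominated_convergence
        (bound := fun k _ => ‖a k‖ * ρ^k)
      · intro k
        apply Continuous.aestronglyMeasurable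
        apply Continuous.mul
        · exact continuous_const.mul (hφcont.pow k)
        · exact Complex.continuous_exp.comp (by continuity)
      · intro k
        filter_upwards with θ _
        have : ‖a k * φ θ ^ k * Complex.exp ((-(m:ℤ)) * θ * Complex.I)‖
            = ‖a k‖ * ρ^k := by
          have habsE : ‖Complex.exp ((-(m:ℤ)) * θ * Complex.I)‖ = 1 := by
            have hcast : ((-(m:ℤ)):ℂ) * θ * Complex.I = ((-((m:ℝ)*θ) : ℝ):ℂ) * Complex.I := by
              push_cast; ring
            rw [hcast, Complex.norm_exp_ofReal_mul_I]
          have habsφ : ‖φ θ‖ = ρ := by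
            simp only [hφdef, norm_mul, Complex.norm_real, Real.norm_eq_abs, Complex.norm_exp_ofReal_mul_I, mul_one]
            exact _root_.abs_of_pos hρ0
          simp only [norm_mul, norm_pow, habsE, habsφ, mul_one]
        rw [this]
      · filter_upwards with θ _; exact hsummable
      · apply _root_.intervalIntegrable_const
      · filter_upwards with θ _
        exact (hha (φ θ) (hφmem θ)).mul_right _
    have hval : ∀ k : ℕ, (∫ θ in (0:ℝ)..(2*Real.pi),
        (a k * φ θ ^ k) * Complex.exp ((-(m:ℤ)) * θ * Complex.I))
        = if k = m then 2*Real.pi * (a m * (ρ:ℂ)^m) else 0 := by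
      intro k
      have hrw : ∀ θ:ℝ, (a k * φ θ ^ k) * Complex.exp ((-(m:ℤ)) * θ * Complex.I)
          = (a k * (ρ:ℂ)^k) * Complex.exp ((((k:ℤ) - m : ℤ):ℂ) * θ * Complex.I) := by
        intro θ
        have he : Complex.exp ((θ:ℂ) * Complex.I) ^ k * Complex.exp ((-(m:ℤ)) * θ * Complex.I)
            = Complex.exp ((((k:ℤ) - m : ℤ):ℂ) * θ * Complex.I) := by
          rw [← Complex.exp_nat_mul, ← Complex.exp_add]
          congr 1
          push_cast
          ring
        simp only [hφdef, mul_pow]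
        linear_combination (a k * (ρ:ℂ)^k) * he
      simp only [hrw]
      rw [intervalIntegral.integral_const_mul, E_integral]
      by_cases hkm : k = m
      · subst hkm
        simp only [sub_self, Int.cast_zero, eq_self_iff_true, if_true]
        push_cast
        ring
      · have hne : ((k:ℤ) - m) ≠ 0 := sub_ne_zero.mpr (by exact_mod_cast hkm)
        simp [hkm, hne]
    have hfin : (fun k : ℕ => ∫ θ in (0:ℝ)..(2*Real.pi),
        (a k * φ θ ^ k) * Complex.exp ((-(m:ℤ)) * θ * Complex.I))
        = fun k => if k = m then 2*Real.pi * (a m * (ρ:ℂ)^m) else 0 := funext hval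
    rw [hfin] at hHS
    exact hHS.unique (hasSum_ite_eq m _)
  -- derived objects
  set c := a 0 with hcdef
  set E : ℤ → ℝ → ℂ := fun n θ => Complex.exp ((n:ℂ) * θ * Complex.I) with hEdef
  set S : ℝ → ℂ := fun θ => h (φ θ) - c with hSdef
  have hScont : Continuous S := hhcont.sub continuous_const
  have hEcont : ∀ n : ℤ, Continuous (E n) := by
    intro n
    rw [hEdef]
    exact Complex.continuous_exp.comp (by continuity)
  have hEint : ∀ n : ℤ, (∫ θ in (0:ℝ)..(2*Real.pi), E n θ)
      = if n = 0 then (2*Real.pi : ℂ) else 0 := by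
    intro n
    rw [hEdef]
    exact E_integral n
  have hcoefE : ∀ m : ℕ, (∫ θ in (0:ℝ)..(2*Real.pi), h (φ θ) * E (-(m:ℤ)) θ)
      = 2*Real.pi * (a m * (ρ:ℂ)^m) := by
    intro m
    rw [← hcoef m]
    apply intervalIntegral.integral_congr
    intro θ _
    rw [hEdef]
    norm_num
  have hconjE : ∀ (n:ℤ) (θ:ℝ), (starRingEnd ℂ) (E n θ) = E (-n) θ := by
    intro n θ
    rw [hEdef]
    simp only []
    rw [← Complex.exp_conj]
    congr 1
    simp only [map_mul, Complex.conj_I, Complex.conj_ofReal, map_intCast]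
    push_cast
    ring
  have hEmul : ∀ (n m : ℤ) (θ:ℝ), E n θ * E m θ = E (n+m) θ := by
    intro n m θ
    rw [hEdef]
    simp only []
    rw [← Complex.exp_add]
    congr 1
    push_cast
    ring
  have hint0 : (∫ θ in (0:ℝ)..(2*Real.pi), h (φ θ)) = 2*Real.pi * c := by
    have h1 := hcoefE 0
    have h2 : ∀ θ:ℝ, h (φ θ) * E (-(0:ℕ):ℤ) θ = h (φ θ) := by
      intro θ
      rw [hEdef]
      norm_num
    rw [intervalIntegral.integral_congr (fun θ _ => h2 θ)] at h1
    simpa using h1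
  have hS0 : (∫ θ in (0:ℝ)..(2*Real.pi), S θ) = 0 := by
    have h1 : (∫ θ in (0:ℝ)..(2*Real.pi), S θ)
        = (∫ θ in (0:ℝ)..(2*Real.pi), h (φ θ)) - (∫ θ in (0:ℝ)..(2*Real.pi), (c:ℂ)) := by
      rw [← intervalIntegral.integral_sub (hhcont.intervalIntegrable _ _)
        (_root_.intervalIntegrable_const)]
    rw [h1, hint0, intervalIntegral.integral_const]
    simp [Complex.real_smul]
  have hSk : ∀ k : ℕ, (∫ θ in (0:ℝ)..(2*Real.pi), S θ * E (-((k+1:ℕ):ℤ)) θ)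
      = 2*Real.pi * (a (k+1) * (ρ:ℂ)^(k+1)) := by
    intro k
    have h1 : (∫ θ in (0:ℝ)..(2*Real.pi), S θ * E (-((k+1:ℕ):ℤ)) θ)
        = (∫ θ in (0:ℝ)..(2*Real.pi), h (φ θ) * E (-((k+1:ℕ):ℤ)) θ)
          - c * (∫ θ in (0:ℝ)..(2*Real.pi), E (-((k+1:ℕ):ℤ)) θ) := by
      rw [← intervalIntegral.integral_const_mul,
        ← intervalIntegral.integral_sub ((hhcont.fun_mul (hEcont _)).intervalIntegrable _ _)
          ((continuous_const.fun_mul (hEcont _)).intervalIntegrable _ _)]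
      apply intervalIntegral.integral_congr
      intro θ _
      simp only [hSdef]
      ring
    rw [h1, hcoefE (k+1), hEint, if_neg (by omega)]
    ring
  -- Q : energy of S
  set Q : ℝ := ∫ θ in (0:ℝ)..(2*Real.pi), Complex.normSq (S θ) with hQdef
  have hnScont : Continuous fun θ => Complex.normSq (S θ) := Complex.continuous_normSq.comp hScont
  have hQ0 : 0 ≤ Q := by
    rw [hQdef]
    apply intervalIntegral.integral_nonneg (by linarith)
    intro θ _
    exact Complex.normSq_nonneg _
  have hre : ∀ (f : ℝ → ℂ), Continuous f →
      (∫ θ in (0:ℝ)..(2*Real.pi), (f θ).re) = (∫ θ in (0:ℝ)..(2*Real.pi), f θ).re := by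
    intro f hf
    have := ContinuousLinearMap.intervalIntegral_comp_comm Complex.reCLM
      (hf.intervalIntegrable (μ := MeasureTheory.volume) (0:ℝ) (2*Real.pi))
    simpa using this
  have hbterm : ∀ k:ℕ, Complex.normSq (a (k+1) * (ρ:ℂ)^(k+1))
      = (‖a (k+1)‖)^2 * r^(k+1) := by
    intro k
    rw [Complex.normSq_mul, ← Complex.sq_norm (a (k+1)), map_pow, Complex.normSq_ofReal,
      show ρ*ρ = r by nlinarith]
  -- Bessel inequality
  have hBessel : ∀ N : ℕ,
      2*Real.pi * (∑ k ∈ Finset.range N, (‖a (k+1)‖)^2 * r^(k+1)) ≤ Q := by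
    intro N
    set b : ℕ → ℂ := fun k => a (k+1) * (ρ:ℂ)^(k+1) with hbdef
    set P : ℝ → ℂ := fun θ => ∑ k ∈ Finset.range N, b k * E ((k+1:ℕ):ℤ) θ with hPdef
    have hPcont : Continuous P := by
      rw [hPdef]
      exact continuous_finset_sum _ (fun k _ => continuous_const.mul (hEcont _))
    have hconjP : ∀ θ, (starRingEnd ℂ) (P θ)
        = ∑ k ∈ Finset.range N, (starRingEnd ℂ) (b k) * E (-((k+1:ℕ):ℤ)) θ := by
      intro θ
      rw [hPdef]
      simp only [map_sum, map_mul]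
      apply Finset.sum_congr rfl
      intro k _
      rw [hconjE]
    set SigR : ℝ := ∑ k ∈ Finset.range N, (‖a (k+1)‖)^2 * r^(k+1) with hSigdef
    have hSigb : ∀ k:ℕ, Complex.normSq (b k) = (‖a (k+1)‖)^2 * r^(k+1) := fun k => hbterm k
    have hSP : (∫ θ in (0:ℝ)..(2*Real.pi), S θ * (starRingEnd ℂ) (P θ))
        = ((2*Real.pi * SigR : ℝ) : ℂ) := by
      have h2 : Set.EqOn (fun θ => S θ * (starRingEnd ℂ) (P θ))
          (fun θ => ∑ k ∈ Finset.range N,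
            (starRingEnd ℂ) (b k) * (S θ * E (-((k+1:ℕ):ℤ)) θ)) (Set.uIcc 0 (2*Real.pi)) := by
        intro θ _
        simp only [hconjP θ, Finset.mul_sum]
        apply Finset.sum_congr rfl
        intro k _
        ring
      rw [intervalIntegral.integral_congr h2,
        intervalIntegral.integral_finset_sum
          (fun k _ => (continuous_const.fun_mul (hScont.fun_mul (hEcont _))).intervalIntegrable _ _)]
      have h3 : ∀ k ∈ Finset.range N,
          (starRingEnd ℂ) (b k) * (∫ θ in (0:ℝ)..(2*Real.pi), S θ * E (-((k+1:ℕ):ℤ)) θ)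
          = (((2*Real.pi) * ((‖a (k+1)‖)^2 * r^(k+1)) : ℝ) : ℂ) := by
        intro k _
        rw [hSk k]
        rw [show (starRingEnd ℂ) (b k) * (2*(Real.pi:ℂ) * (a (k+1) * (ρ:ℂ)^(k+1)))
            = 2*(Real.pi:ℂ) * (b k * (starRingEnd ℂ) (b k)) by rw [hbdef]; ring,
          Complex.mul_conj, hSigb k]
        push_cast
        ring
      have h5 : ∀ k ∈ Finset.range N,
          (∫ θ in (0:ℝ)..(2*Real.pi), (starRingEnd ℂ) (b k) * (S θ * E (-((k+1:ℕ):ℤ)) θ))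
          = (((2*Real.pi) * ((‖a (k+1)‖)^2 * r^(k+1)) : ℝ) : ℂ) := by
        intro k hk
        rw [intervalIntegral.integral_const_mul]
        exact h3 k hk
      rw [Finset.sum_congr rfl h5, hSigdef, Finset.mul_sum, Complex.ofReal_sum]
    have hPP : (∫ θ in (0:ℝ)..(2*Real.pi), P θ * (starRingEnd ℂ) (P θ))
        = ((2*Real.pi * SigR : ℝ) : ℂ) := by
      have h2 : Set.EqOn (fun θ => P θ * (starRingEnd ℂ) (P θ))
          (fun θ => ∑ j ∈ Finset.range N, ∑ k ∈ Finset.range N,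
            (b j * (starRingEnd ℂ) (b k)) * E ((j:ℤ) - (k:ℤ)) θ) (Set.uIcc 0 (2*Real.pi)) := by
        intro θ _
        simp only [hconjP θ]; simp only [hPdef]
        rw [Finset.sum_mul_sum]
        apply Finset.sum_congr rfl
        intro j _
        apply Finset.sum_congr rfl
        intro k _
        rw [show (b j * E ((j+1:ℕ):ℤ) θ) * ((starRingEnd ℂ) (b k) * E (-((k+1:ℕ):ℤ)) θ)
            = (b j * (starRingEnd ℂ) (b k)) * (E ((j+1:ℕ):ℤ) θ * E (-((k+1:ℕ):ℤ)) θ) by ring,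
          hEmul]
        congr 2
        push_cast
        ring
      rw [intervalIntegral.integral_congr h2,
        intervalIntegral.integral_finset_sum (fun j _ =>
          (continuous_finset_sum _ (fun k _ => continuous_const.fun_mul (hEcont _))).intervalIntegrable _ _)]
      have hinner : ∀ j ∈ Finset.range N,
          (∫ θ in (0:ℝ)..(2*Real.pi), ∑ k ∈ Finset.range N,
            (b j * (starRingEnd ℂ) (b k)) * E ((j:ℤ) - (k:ℤ)) θ)
          = (((2*Real.pi) * ((‖a (j+1)‖)^2 * r^(j+1)) : ℝ) : ℂ) := by
        intro j hj
        rw [intervalIntegral.integral_finset_sum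
          (fun k _ => (continuous_const.fun_mul (hEcont _)).intervalIntegrable _ _)]
        have h4 : ∀ k ∈ Finset.range N,
            (∫ θ in (0:ℝ)..(2*Real.pi), (b j * (starRingEnd ℂ) (b k)) * E ((j:ℤ) - (k:ℤ)) θ)
            = if k = j then 2*(Real.pi:ℂ) * (b j * (starRingEnd ℂ) (b j)) else 0 := by
          intro k _
          rw [intervalIntegral.integral_const_mul, hEint]
          by_cases hkj : k = j
          · subst hkj
            simp only [sub_self, eq_self_iff_true, if_true]
            push_cast
            ring
          · have : ((j:ℤ) - (k:ℤ)) ≠ 0 := by omega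
            simp [this, hkj]
        rw [Finset.sum_congr rfl h4, Finset.sum_ite_eq' (Finset.range N) j
          (fun _ => 2*(Real.pi:ℂ) * (b j * (starRingEnd ℂ) (b j))), if_pos hj,
          Complex.mul_conj, hSigb j]
        push_cast
        ring
      rw [Finset.sum_congr rfl hinner, hSigdef, Finset.mul_sum, Complex.ofReal_sum]
    -- nonnegativity of ‖S - P‖²
    have hnn : 0 ≤ ∫ θ in (0:ℝ)..(2*Real.pi), Complex.normSq (S θ - P θ) := by
      apply intervalIntegral.integral_nonneg (by linarith)
      intro θ _
      exact Complex.normSq_nonneg _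
    have hsplit : (∫ θ in (0:ℝ)..(2*Real.pi), Complex.normSq (S θ - P θ))
        = Q - 2*(2*Real.pi*SigR) + (2*Real.pi*SigR) := by
      have h2 : Set.EqOn (fun θ => Complex.normSq (S θ - P θ))
          (fun θ => Complex.normSq (S θ) - 2*((S θ * (starRingEnd ℂ) (P θ)).re)
            + ((P θ * (starRingEnd ℂ) (P θ)).re)) (Set.uIcc 0 (2*Real.pi)) := by
        intro θ _
        exact SPexpand (S θ) (P θ)
      have hcont1 : Continuous fun θ => S θ * (starRingEnd ℂ) (P θ) :=
        hScont.mul (Complex.continuous_conj.comp hPcont)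
      have hcont2 : Continuous fun θ => P θ * (starRingEnd ℂ) (P θ) :=
        hPcont.mul (Complex.continuous_conj.comp hPcont)
      have hcont1r : Continuous fun θ => (S θ * (starRingEnd ℂ) (P θ)).re :=
        Complex.continuous_re.comp hcont1
      have hcont2r : Continuous fun θ => (P θ * (starRingEnd ℂ) (P θ)).re :=
        Complex.continuous_re.comp hcont2
      rw [intervalIntegral.integral_congr h2]
      rw [intervalIntegral.integral_add
        ((hnScont.fun_sub (continuous_const.fun_mul hcont1r)).intervalIntegrable _ _)
        (hcont2r.intervalIntegrable _ _)]
      rw [intervalIntegral.integral_sub (hnScont.intervalIntegrable _ _)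
        ((continuous_const.fun_mul hcont1r).intervalIntegrable _ _)]
      rw [intervalIntegral.integral_const_mul]
      rw [hre _ hcont1, hre _ hcont2, hSP, hPP]
      simp [Complex.ofReal_re]
      exact hQdef.symm
    rw [hsplit] at hnn
    linarith
  -- T part
  set nc : ℝ := Complex.normSq c with hncdef
  have hTcont : Continuous fun θ => Complex.normSq (1 - (starRingEnd ℂ) c * h (φ θ)) :=
    Complex.continuous_normSq.comp (continuous_const.sub (continuous_const.mul hhcont))
  have hTint : (∫ θ in (0:ℝ)..(2*Real.pi), Complex.normSq (1 - (starRingEnd ℂ) c * h (φ θ)))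
      = 2*Real.pi * (1-nc)^2 + nc * Q := by
    have h2 : Set.EqOn (fun θ => Complex.normSq (1 - (starRingEnd ℂ) c * h (φ θ)))
        (fun θ => ((1 - nc)^2 + nc * Complex.normSq (S θ))
          + 2 * (((((nc:ℂ) - 1) * (starRingEnd ℂ) c) * S θ).re)) (Set.uIcc 0 (2*Real.pi)) := by
      intro θ _
      show Complex.normSq (1 - (starRingEnd ℂ) c * h (φ θ))
        = ((1 - nc)^2 + nc * Complex.normSq (S θ))
          + 2 * (((((nc:ℂ) - 1) * (starRingEnd ℂ) c) * S θ).re)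
      have h4 : h (φ θ) - c = S θ := rfl
      rw [Texpand c (h (φ θ)), h4, ← hncdef]
      ring
    have hcont3 : Continuous fun θ => ((((nc:ℂ) - 1) * (starRingEnd ℂ) c) * S θ) :=
      continuous_const.mul hScont
    have hcont3r : Continuous fun θ => ((((nc:ℂ) - 1) * (starRingEnd ℂ) c) * S θ).re :=
      Complex.continuous_re.comp hcont3
    rw [intervalIntegral.integral_congr h2]
    rw [intervalIntegral.integral_add
      (((continuous_const.fun_add (continuous_const.fun_mul hnScont))).intervalIntegrable _ _)
      ((continuous_const.fun_mul hcont3r).intervalIntegrable _ _)]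
    rw [intervalIntegral.integral_add (_root_.intervalIntegrable_const)
      ((continuous_const.fun_mul hnScont).intervalIntegrable _ _)]
    rw [intervalIntegral.integral_const, intervalIntegral.integral_const_mul,
      intervalIntegral.integral_const_mul, hre _ hcont3,
      intervalIntegral.integral_const_mul, hS0]
    simp
    left; exact hQdef.symm
    try ring
  -- pointwise Schwarz-Pick bound
  have hpt : ∀ θ : ℝ, Complex.normSq (S θ)
      ≤ r * Complex.normSq (1 - (starRingEnd ℂ) c * h (φ θ)) := by
    intro θ
    have hsp := schwarz_pick hhd hb (hφmem θ)
    rw [hh0] at hsp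
    have habsφ : ‖φ θ‖ = ρ := by
      simp only [hφdef, norm_mul, Complex.norm_real, Real.norm_eq_abs, Complex.norm_exp_ofReal_mul_I, mul_one]
      exact _root_.abs_of_pos hρ0
    rw [habsφ] at hsp
    have h5 : S θ = h (φ θ) - c := rfl
    rw [← Complex.sq_norm, ← Complex.sq_norm, h5]
    have hTnn := norm_nonneg (1 - (starRingEnd ℂ) c * h (φ θ))
    have hSnn := norm_nonneg (h (φ θ) - c)
    nlinarith [hsp, hρ0.le, hρr]
  have hQle : Q ≤ r * (2*Real.pi * (1-nc)^2 + nc * Q) := by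
    have h6 : Q ≤ ∫ θ in (0:ℝ)..(2*Real.pi),
        r * Complex.normSq (1 - (starRingEnd ℂ) c * h (φ θ)) := by
      rw [hQdef]
      apply intervalIntegral.integral_mono_on (by linarith)
        (hnScont.intervalIntegrable _ _)
        ((continuous_const.mul hTcont).intervalIntegrable _ _)
      intro θ _
      exact hpt θ
    rwa [intervalIntegral.integral_const_mul, hTint] at h6
  -- numeric facts
  have hnc0 : 0 ≤ nc := Complex.normSq_nonneg c
  have hnc1 : nc ≤ 1 := by
    have h7 := hb 0 h0mem
    rw [hh0] at h7
    rw [hncdef, ← Complex.sq_norm]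
    nlinarith [norm_nonneg c]
  have hden : 0 < 1 - nc * r := by nlinarith
  have hNbound : ∀ N : ℕ, (∑ k ∈ Finset.range N, (‖a (k+1)‖)^2 * r^(k+1))
      ≤ r * (1-nc)^2 / (1-nc*r) := by
    intro N
    have h8 := hBessel N
    rw [le_div_iff₀ hden]
    nlinarith [hπ, hQ0, hQle, h8, mul_le_mul_of_nonneg_right h8 hden.le]
  have hfinal : (∑' k:ℕ, (‖a (k+1)‖)^2 * r^(k+1)) ≤ r * (1-nc)^2 / (1-nc*r) :=
    Real.tsum_le_of_sum_range_le
      (fun n => mul_nonneg (sq_nonneg _) (pow_nonneg hr0.le _)) hNbound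
  have h9 : r * (1 - (‖a 0‖)^2)^2 / (1 - (‖a 0‖)^2 * r)
      = r * (1-nc)^2 / (1-nc*r) := by
    rw [hncdef, hcdef, Complex.sq_norm]
  rw [h9]
  exact hfinal
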